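/- Let T be an extension of Robinson arithmetic Q with Pr_T definable, and let ψ, n, t be as in Boolos's construction. If T ⊢ ψ(n,t), then the formula ψ(v₀,t) names the number n, i.e. T ⊢ (∀v₀)(ψ(v₀,t) ↔ v₀ = n). -/

import Mathlib

namespace Boolos

/-- Terms of the first-order language of arithmetic: variables v₀,v₁,…, 0, successor s, +, ·. -/
inductive Term : Type
  | var : ℕ → Term
  | zero : Term
  | succ : Term → Term
  | add : Term → Term → Term
  | mul : Term → Term → Term
  deriving DecidableEq

/-- Formulas of the first-order language of arithmetic. -/
inductive Formula : Type
  | eq : Term → Term → Formula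
  | lt : Term → Term → Formula
  | not : Formula → Formula
  | and : Formula → Formula → Formula
  | or : Formula → Formula → Formula
  | imp : Formula → Formula → Formula
  | all : ℕ → Formula → Formula
  | ex : ℕ → Formula → Formula
  deriving DecidableEq

/-- The primitive symbols of the language (finitely many apart from the variables). -/
inductive Symbol : Type
  | zero : Symbol
  | succ : Symbol
  | plus : Symbol
  | times : Symbol
  | eqs : Symbol
  | lts : Symbol
  | nots : Symbol
  | ands : Symbol
  | ors : Symbol
  | imps : Symbol
  | alls : Symbol
  | exs : Symbol
  | var : ℕ → Symbol
  deriving DecidableEq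

/-- Gödel numbers of the primitive symbols. -/
def Symbol.code : Symbol → ℕ
  | .zero => 1
  | .succ => 2
  | .plus => 3
  | .times => 4
  | .eqs => 5
  | .lts => 6
  | .nots => 7
  | .ands => 8
  | .ors => 9
  | .imps => 10
  | .alls => 11
  | .exs => 12
  | .var n => 13 + n

/-- The sequence of symbols occurring in a term. -/
def Term.symbols : Term → List Symbol
  | .var i => [.var i]
  | .zero => [.zero]
  | .succ t => .succ :: t.symbols
  | .add t u => t.symbols ++ .plus :: u.symbols
  | .mul t u => t.symbols ++ .times :: u.symbols

/-- The sequence of symbols occurring in a formula. -/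
def Formula.symbols : Formula → List Symbol
  | .eq t u => t.symbols ++ .eqs :: u.symbols
  | .lt t u => t.symbols ++ .lts :: u.symbols
  | .not φ => .nots :: φ.symbols
  | .and φ ψ => φ.symbols ++ .ands :: ψ.symbols
  | .or φ ψ => φ.symbols ++ .ors :: ψ.symbols
  | .imp φ ψ => φ.symbols ++ .imps :: ψ.symbols
  | .all i φ => .alls :: .var i :: φ.symbols
  | .ex i φ => .exs :: .var i :: φ.symbols

/-- |e| : the length (number of symbols) of a term. -/
def Term.length (t : Term) : ℕ := t.symbols.length

/-- |μ| : the length (number of symbols) of a formula. -/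
def Formula.length (φ : Formula) : ℕ := φ.symbols.length

/-- A fixed standard (pairing-based, injective) Gödel numbering of terms. -/
def Term.code : Term → ℕ
  | .var i => Nat.pair 0 i
  | .zero => Nat.pair 1 0
  | .succ t => Nat.pair 2 t.code
  | .add t u => Nat.pair 3 (Nat.pair t.code u.code)
  | .mul t u => Nat.pair 4 (Nat.pair t.code u.code)

/-- ⌜μ⌝ : the Gödel number of a formula. -/
def Formula.gnum : Formula → ℕ
  | .eq t u => Nat.pair 0 (Nat.pair t.code u.code)
  | .lt t u => Nat.pair 1 (Nat.pair t.code u.code)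
  | .not φ => Nat.pair 2 φ.gnum
  | .and φ ψ => Nat.pair 3 (Nat.pair φ.gnum ψ.gnum)
  | .or φ ψ => Nat.pair 4 (Nat.pair φ.gnum ψ.gnum)
  | .imp φ ψ => Nat.pair 5 (Nat.pair φ.gnum ψ.gnum)
  | .all i φ => Nat.pair 6 (Nat.pair i φ.gnum)
  | .ex i φ => Nat.pair 7 (Nat.pair i φ.gnum)

/-- The variables occurring in a term. -/
def Term.varsOf : Term → Finset ℕ
  | .var i => {i}
  | .zero => ∅
  | .succ t => t.varsOf
  | .add t u => t.varsOf ∪ u.varsOf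
  | .mul t u => t.varsOf ∪ u.varsOf

/-- All variables (free or bound) occurring in a formula. -/
def Formula.allVars : Formula → Finset ℕ
  | .eq t u => t.varsOf ∪ u.varsOf
  | .lt t u => t.varsOf ∪ u.varsOf
  | .not φ => φ.allVars
  | .and φ ψ => φ.allVars ∪ ψ.allVars
  | .or φ ψ => φ.allVars ∪ ψ.allVars
  | .imp φ ψ => φ.allVars ∪ ψ.allVars
  | .all i φ => insert i φ.allVars
  | .ex i φ => insert i φ.allVars

/-- The free variables of a formula. -/
def Formula.freeVars : Formula → Finset ℕ
  | .eq t u => t.varsOf ∪ u.varsOf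
  | .lt t u => t.varsOf ∪ u.varsOf
  | .not φ => φ.freeVars
  | .and φ ψ => φ.freeVars ∪ ψ.freeVars
  | .or φ ψ => φ.freeVars ∪ ψ.freeVars
  | .imp φ ψ => φ.freeVars ∪ ψ.freeVars
  | .all i φ => φ.freeVars.erase i
  | .ex i φ => φ.freeVars.erase i

/-- Substitution of a term for a variable in a term. -/
def Term.subst : Term → ℕ → Term → Term
  | .var i, x, s => if i = x then s else .var i
  | .zero, _, _ => .zero
  | .succ t, x, s => .succ (t.subst x s)
  | .add t u, x, s => .add (t.subst x s) (u.subst x s)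
  | .mul t u, x, s => .mul (t.subst x s) (u.subst x s)

/-- Substitution of a term for the free occurrences of a variable in a formula. -/
def Formula.subst : Formula → ℕ → Term → Formula
  | .eq t u, x, s => .eq (t.subst x s) (u.subst x s)
  | .lt t u, x, s => .lt (t.subst x s) (u.subst x s)
  | .not φ, x, s => .not (φ.subst x s)
  | .and φ ψ, x, s => .and (φ.subst x s) (ψ.subst x s)
  | .or φ ψ, x, s => .or (φ.subst x s) (ψ.subst x s)
  | .imp φ ψ, x, s => .imp (φ.subst x s) (ψ.subst x s)
  | .all i φ, x, s => if i = x then .all i φ else .all i (φ.subst x s)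
  | .ex i φ, x, s => if i = x then .ex i φ else .ex i (φ.subst x s)

/-- The number of occurrences of a variable in a term. -/
def Term.countOcc : Term → ℕ → ℕ
  | .var i, x => if i = x then 1 else 0
  | .zero, _ => 0
  | .succ t, x => t.countOcc x
  | .add t u, x => t.countOcc x + u.countOcc x
  | .mul t u, x => t.countOcc x + u.countOcc x

/-- The number of free occurrences of a variable in a formula. -/
def Formula.countFreeOcc : Formula → ℕ → ℕ
  | .eq t u, x => t.countOcc x + u.countOcc x
  | .lt t u, x => t.countOcc x + u.countOcc x
  | .not φ, x => φ.countFreeOcc x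
  | .and φ ψ, x => φ.countFreeOcc x + ψ.countFreeOcc x
  | .or φ ψ, x => φ.countFreeOcc x + ψ.countFreeOcc x
  | .imp φ ψ, x => φ.countFreeOcc x + ψ.countFreeOcc x
  | .all i φ, x => if i = x then 0 else φ.countFreeOcc x
  | .ex i φ, x => if i = x then 0 else φ.countFreeOcc x

/-- The numeral s s … s 0 for a natural number. -/
def numeral : ℕ → Term
  | 0 => .zero
  | n + 1 => .succ (numeral n)

/-- Structures for the language of arithmetic. -/
structure Struct where
  carrier : Type
  zero : carrier
  succ : carrier → carrier
  add : carrier → carrier → carrier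
  mul : carrier → carrier → carrier
  lt : carrier → carrier → Prop

/-- The value of a term in a structure under an assignment. -/
def Term.val (M : Struct) (v : ℕ → M.carrier) : Term → M.carrier
  | .var i => v i
  | .zero => M.zero
  | .succ t => M.succ (Term.val M v t)
  | .add t u => M.add (Term.val M v t) (Term.val M v u)
  | .mul t u => M.mul (Term.val M v t) (Term.val M v u)

/-- Satisfaction of a formula in a structure under an assignment. -/
def Formula.Realize (M : Struct) : (ℕ → M.carrier) → Formula → Prop
  | v, .eq t u => Term.val M v t = Term.val M v u
  | v, .lt t u => M.lt (Term.val M v t) (Term.val M v u)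
  | v, .not φ => ¬ Formula.Realize M v φ
  | v, .and φ ψ => Formula.Realize M v φ ∧ Formula.Realize M v ψ
  | v, .or φ ψ => Formula.Realize M v φ ∨ Formula.Realize M v ψ
  | v, .imp φ ψ => Formula.Realize M v φ → Formula.Realize M v ψ
  | v, .all i φ => ∀ a : M.carrier, Formula.Realize M (Function.update v i a) φ
  | v, .ex i φ => ∃ a : M.carrier, Formula.Realize M (Function.update v i a) φ

/-- ω : the standard model of arithmetic. -/
@[reducible] def stdModel : Struct :=
  { carrier := ℕ, zero := 0, succ := Nat.succ, add := (· + ·), mul := (· * ·),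
    lt := (· < ·) }

/-- A formula is true if it holds in the standard model ω (under every assignment). -/
def IsTrue (φ : Formula) : Prop := ∀ v : ℕ → ℕ, Formula.Realize stdModel v φ

/-- The value of a (closed) term in the standard model ω. -/
def Term.valNat (t : Term) : ℕ := Term.val stdModel (fun _ => 0) t

/-- A sentence is a formula with no free variables. -/
def Formula.IsSentence (φ : Formula) : Prop := φ.freeVars = ∅

/-- Provability from a theory; by the Gödel completeness theorem, identified with
semantic consequence. -/
def Proves (T : Set Formula) (φ : Formula) : Prop :=
  ∀ (M : Struct) (v : ℕ → M.carrier),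
    (∀ ψ ∈ T, Formula.Realize M v ψ) → Formula.Realize M v φ

/-- Consistency: no formula is both provable and refutable. -/
def Consistent (T : Set Formula) : Prop :=
  ¬ ∃ φ : Formula, Proves T φ ∧ Proves T (.not φ)

/-- The biconditional, as an abbreviation. -/
def Formula.iffF (φ ψ : Formula) : Formula := .and (.imp φ ψ) (.imp ψ φ)

def v0 : Term := .var 0
def v1 : Term := .var 1
def v2 : Term := .var 2

/-- The axioms of Robinson arithmetic Q (with < defined as usual). -/
def QAxioms : Set Formula :=
  { .all 0 (.all 1 (.imp (.eq (.succ v0) (.succ v1)) (.eq v0 v1))),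
    .all 0 (.not (.eq (.succ v0) .zero)),
    .all 0 (.imp (.not (.eq v0 .zero)) (.ex 1 (.eq v0 (.succ v1)))),
    .all 0 (.eq (.add v0 .zero) v0),
    .all 0 (.all 1 (.eq (.add v0 (.succ v1)) (.succ (.add v0 v1)))),
    .all 0 (.eq (.mul v0 .zero) .zero),
    .all 0 (.all 1 (.eq (.mul v0 (.succ v1)) (.add (.mul v0 v1) v0))),
    .all 0 (.all 1 (Formula.iffF (.lt v0 v1) (.ex 2 (.eq (.add v2 (.succ v0)) v1)))) }

/-- Pr_S : the set of Gödel numbers of sentences provable in S. -/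
def PrSet (T : Set Formula) : Set ℕ :=
  {m | ∃ σ : Formula, σ.IsSentence ∧ Proves T σ ∧ m = σ.gnum}

/-- A formula μ with at most the free variable v₀ names the number i in T
if T ⊢ (∀v₀)(μ(v₀) ↔ v₀ = i). -/
def Names (T : Set Formula) (μ : Formula) (i : ℕ) : Prop :=
  μ.freeVars ⊆ {0} ∧ Proves T (.all 0 (Formula.iffF μ (.eq v0 (numeral i))))

/-- i is named in T by some formula of length < m. -/
def Nameable (T : Set Formula) (m i : ℕ) : Prop :=
  ∃ μ : Formula, μ.length < m ∧ Names T μ i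

/-- φ(v₀) defines the set A in the standard model ω. -/
def DefinesSet (φ : Formula) (A : Set ℕ) : Prop :=
  φ.freeVars ⊆ {0} ∧ ∀ i : ℕ, i ∈ A ↔ IsTrue (φ.subst 0 (numeral i))

/-- A set of natural numbers is definable (in ω). -/
def Definable (A : Set ℕ) : Prop := ∃ φ : Formula, DefinesSet φ A

/-- φ(v₀,v₁) defines the binary relation R in the standard model ω. -/
def DefinesRel (φ : Formula) (R : ℕ → ℕ → Prop) : Prop :=
  φ.freeVars ⊆ {0, 1} ∧
    ∀ i j : ℕ, R i j ↔ IsTrue ((φ.subst 0 (numeral i)).subst 1 (numeral j))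

/-- The relation B of Boolos's construction: (i,j) ∈ B iff some formula μ with at most
the free variable v₀, with ⌜μ⌝ < g(j) and |μ| < j, names i. -/
def BRel (T : Set Formula) (g : ℕ → ℕ) (i j : ℕ) : Prop :=
  ∃ μ : Formula, μ.gnum < g j ∧ μ.length < j ∧ Names T μ i

/-- g is a recursive function bounding Gödel numbers in terms of length, as in the
construction: whenever all variables of μ are among the first j ones and |μ| < j,
we have ⌜μ⌝ < g(j). -/
def GoodBound (g : ℕ → ℕ) : Prop :=
  Computable g ∧
    ∀ (μ : Formula) (j : ℕ), μ.allVars ⊆ Finset.range j → μ.length < j → μ.gnum < g j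

/-- ψ(v₀,v₁) ≔ ¬φ(v₀,v₁) ∧ (∀v₂ < v₀) φ(v₂,v₁). -/
def psiOf (φ : Formula) : Formula :=
  .and (.not φ) (.all 2 (.imp (.lt v2 v0) (φ.subst 0 v2)))

/-- The closed term t ≔ 10·(k·k). -/
def tTerm (k : ℕ) : Term := .mul (numeral 10) (.mul (numeral k) (numeral k))

/-! ### Auxiliary lemmas for the proof -/

lemma Term.val_agree (M : Struct) (t : Term) (v w : ℕ → M.carrier)
    (h : ∀ i ∈ t.varsOf, v i = w i) : t.val M v = t.val M w := by
  induction t with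
  | var i => exact h i (by simp [Term.varsOf])
  | zero => rfl
  | succ t ih =>
      simp only [Term.val]
      rw [ih (fun i hi => h i (by simpa [Term.varsOf] using hi))]
  | add t u iht ihu =>
      simp only [Term.val]
      rw [iht (fun i hi => h i (by simp [Term.varsOf, hi])),
          ihu (fun i hi => h i (by simp [Term.varsOf, hi]))]
  | mul t u iht ihu =>
      simp only [Term.val]
      rw [iht (fun i hi => h i (by simp [Term.varsOf, hi])),
          ihu (fun i hi => h i (by simp [Term.varsOf, hi]))]

lemma Formula.realize_agree (M : Struct) (φ : Formula) :
    ∀ v w : ℕ → M.carrier, (∀ i ∈ φ.freeVars, v i = w i) →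
      (Formula.Realize M v φ ↔ Formula.Realize M w φ) := by
  induction φ with
  | eq t u =>
      intro v w h
      simp only [Formula.Realize]
      rw [Term.val_agree M t v w (fun i hi => h i (by simp [Formula.freeVars, hi])),
          Term.val_agree M u v w (fun i hi => h i (by simp [Formula.freeVars, hi]))]
  | lt t u =>
      intro v w h
      simp only [Formula.Realize]
      rw [Term.val_agree M t v w (fun i hi => h i (by simp [Formula.freeVars, hi])),
          Term.val_agree M u v w (fun i hi => h i (by simp [Formula.freeVars, hi]))]
  | not φ ih =>
      intro v w h
      simp only [Formula.Realize]
      rw [ih v w h]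
  | and φ ψ ihφ ihψ =>
      intro v w h
      simp only [Formula.Realize]
      rw [ihφ v w (fun i hi => h i (by simp [Formula.freeVars, hi])),
          ihψ v w (fun i hi => h i (by simp [Formula.freeVars, hi]))]
  | or φ ψ ihφ ihψ =>
      intro v w h
      simp only [Formula.Realize]
      rw [ihφ v w (fun i hi => h i (by simp [Formula.freeVars, hi])),
          ihψ v w (fun i hi => h i (by simp [Formula.freeVars, hi]))]
  | imp φ ψ ihφ ihψ =>
      intro v w h
      simp only [Formula.Realize]
      rw [ihφ v w (fun i hi => h i (by simp [Formula.freeVars, hi])),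
          ihψ v w (fun i hi => h i (by simp [Formula.freeVars, hi]))]
  | all i φ ih =>
      intro v w h
      simp only [Formula.Realize]
      apply forall_congr'
      intro a
      apply ih
      intro j hj
      by_cases hji : j = i
      · subst hji; simp
      · rw [Function.update_of_ne hji, Function.update_of_ne hji]
        exact h j (by simp [Formula.freeVars, Finset.mem_erase, hji, hj])
  | ex i φ ih =>
      intro v w h
      simp only [Formula.Realize]
      apply exists_congr
      intro a
      apply ih
      intro j hj
      by_cases hji : j = i
      · subst hji; simp
      · rw [Function.update_of_ne hji, Function.update_of_ne hji]
        exact h j (by simp [Formula.freeVars, Finset.mem_erase, hji, hj])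

lemma Term.val_subst (M : Struct) (x : ℕ) (s : Term) (t : Term) (v : ℕ → M.carrier) :
    (t.subst x s).val M v = t.val M (Function.update v x (s.val M v)) := by
  induction t with
  | var i =>
      by_cases h : i = x
      · subst h; simp [Term.subst, Term.val]
      · simp [Term.subst, Term.val, h]
  | zero => rfl
  | succ t ih => simp [Term.subst, Term.val, ih]
  | add t u iht ihu => simp [Term.subst, Term.val, iht, ihu]
  | mul t u iht ihu => simp [Term.subst, Term.val, iht, ihu]

/-- The bound variables (binders) of a formula. -/
def Formula.bounds : Formula → Finset ℕ
  | .eq _ _ => ∅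
  | .lt _ _ => ∅
  | .not φ => φ.bounds
  | .and φ ψ => φ.bounds ∪ ψ.bounds
  | .or φ ψ => φ.bounds ∪ ψ.bounds
  | .imp φ ψ => φ.bounds ∪ ψ.bounds
  | .all i φ => insert i φ.bounds
  | .ex i φ => insert i φ.bounds

lemma Formula.bounds_subset_allVars (φ : Formula) : φ.bounds ⊆ φ.allVars := by
  induction φ with
  | eq t u => simp [Formula.bounds]
  | lt t u => simp [Formula.bounds]
  | not φ ih => exact ih
  | and φ ψ ihφ ihψ => exact Finset.union_subset_union ihφ ihψ
  | or φ ψ ihφ ihψ => exact Finset.union_subset_union ihφ ihψ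
  | imp φ ψ ihφ ihψ => exact Finset.union_subset_union ihφ ihψ
  | all i φ ih => exact Finset.insert_subset_insert i ih
  | ex i φ ih => exact Finset.insert_subset_insert i ih

lemma Formula.realize_subst (M : Struct) (s : Term) (x : ℕ) (φ : Formula) :
    ∀ v : ℕ → M.carrier, (∀ i ∈ s.varsOf, i ∉ φ.bounds) →
      (Formula.Realize M v (φ.subst x s) ↔
        Formula.Realize M (Function.update v x (s.val M v)) φ) := by
  induction φ with
  | eq t u => intro v h; simp [Formula.subst, Formula.Realize, Term.val_subst]
  | lt t u => intro v h; simp [Formula.subst, Formula.Realize, Term.val_subst]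
  | not φ ih =>
      intro v h
      simp only [Formula.subst, Formula.Realize]
      rw [ih v h]
  | and φ ψ ihφ ihψ =>
      intro v h
      simp only [Formula.subst, Formula.Realize]
      rw [ihφ v (fun i hi hb => h i hi (Finset.mem_union_left _ hb)),
          ihψ v (fun i hi hb => h i hi (Finset.mem_union_right _ hb))]
  | or φ ψ ihφ ihψ =>
      intro v h
      simp only [Formula.subst, Formula.Realize]
      rw [ihφ v (fun i hi hb => h i hi (Finset.mem_union_left _ hb)),
          ihψ v (fun i hi hb => h i hi (Finset.mem_union_right _ hb))]
  | imp φ ψ ihφ ihψ =>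
      intro v h
      simp only [Formula.subst, Formula.Realize]
      rw [ihφ v (fun i hi hb => h i hi (Finset.mem_union_left _ hb)),
          ihψ v (fun i hi hb => h i hi (Finset.mem_union_right _ hb))]
  | all i φ ih =>
      intro v h
      by_cases hix : i = x
      · subst hix
        simp only [Formula.subst, if_pos rfl, Formula.Realize]
        constructor
        · intro ha a; rw [Function.update_idem]; exact ha a
        · intro ha a; have := ha a; rwa [Function.update_idem] at this
      · have hiv : i ∉ s.varsOf := fun hmem => (h i hmem) (by simp [Formula.bounds])
        simp only [Formula.subst, if_neg hix, Formula.Realize]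
        apply forall_congr'
        intro a
        rw [ih (Function.update v i a)
            (fun j hj hb => h j hj (by simp [Formula.bounds, hb]))]
        rw [Term.val_agree M s (Function.update v i a) v
            (fun j hj => Function.update_of_ne (by rintro rfl; exact hiv hj) _ _)]
        rw [Function.update_comm hix]
  | ex i φ ih =>
      intro v h
      by_cases hix : i = x
      · subst hix
        simp only [Formula.subst, if_pos rfl, Formula.Realize]
        constructor
        · rintro ⟨a, ha⟩; exact ⟨a, by rw [Function.update_idem]; exact ha⟩
        · rintro ⟨a, ha⟩; rw [Function.update_idem] at ha; exact ⟨a, ha⟩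
      · have hiv : i ∉ s.varsOf := fun hmem => (h i hmem) (by simp [Formula.bounds])
        simp only [Formula.subst, if_neg hix, Formula.Realize]
        apply exists_congr
        intro a
        rw [ih (Function.update v i a)
            (fun j hj hb => h j hj (by simp [Formula.bounds, hb]))]
        rw [Term.val_agree M s (Function.update v i a) v
            (fun j hj => Function.update_of_ne (by rintro rfl; exact hiv hj) _ _)]
        rw [Function.update_comm hix]

lemma Term.varsOf_subst (x : ℕ) (s t : Term) :
    (t.subst x s).varsOf ⊆ t.varsOf.erase x ∪ s.varsOf := by
  induction t with
  | var i =>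
      by_cases h : i = x
      · simp [Term.subst, h]
      · intro j hj
        simp [Term.subst, h, Term.varsOf] at hj
        subst hj
        exact Finset.mem_union_left _ (Finset.mem_erase.mpr ⟨h, by simp [Term.varsOf]⟩)
  | zero => simp [Term.subst, Term.varsOf]
  | succ t ih => exact ih
  | add t u iht ihu =>
      intro j hj
      simp only [Term.subst, Term.varsOf, Finset.mem_union] at hj
      rcases hj with hj | hj
      · have := iht hj
        simp only [Finset.mem_union, Finset.mem_erase, Term.varsOf] at this ⊢
        tauto
      · have := ihu hj
        simp only [Finset.mem_union, Finset.mem_erase, Term.varsOf] at this ⊢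
        tauto
  | mul t u iht ihu =>
      intro j hj
      simp only [Term.subst, Term.varsOf, Finset.mem_union] at hj
      rcases hj with hj | hj
      · have := iht hj
        simp only [Finset.mem_union, Finset.mem_erase, Term.varsOf] at this ⊢
        tauto
      · have := ihu hj
        simp only [Finset.mem_union, Finset.mem_erase, Term.varsOf] at this ⊢
        tauto

lemma Formula.freeVars_subst (φ : Formula) (x : ℕ) (s : Term) :
    (φ.subst x s).freeVars ⊆ φ.freeVars.erase x ∪ s.varsOf := by
  induction φ with
  | eq t u =>
      intro j hj
      simp only [Formula.subst, Formula.freeVars, Finset.mem_union] at hj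
      rcases hj with hj | hj
      · have := Term.varsOf_subst x s t hj
        simp only [Finset.mem_union, Finset.mem_erase, Formula.freeVars] at this ⊢; tauto
      · have := Term.varsOf_subst x s u hj
        simp only [Finset.mem_union, Finset.mem_erase, Formula.freeVars] at this ⊢; tauto
  | lt t u =>
      intro j hj
      simp only [Formula.subst, Formula.freeVars, Finset.mem_union] at hj
      rcases hj with hj | hj
      · have := Term.varsOf_subst x s t hj
        simp only [Finset.mem_union, Finset.mem_erase, Formula.freeVars] at this ⊢; tauto
      · have := Term.varsOf_subst x s u hj
        simp only [Finset.mem_union, Finset.mem_erase, Formula.freeVars] at this ⊢; tauto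
  | not φ ih => exact ih
  | and φ ψ ihφ ihψ =>
      intro j hj
      simp only [Formula.subst, Formula.freeVars, Finset.mem_union] at hj
      rcases hj with hj | hj
      · have := ihφ hj
        simp only [Finset.mem_union, Finset.mem_erase, Formula.freeVars] at this ⊢; tauto
      · have := ihψ hj
        simp only [Finset.mem_union, Finset.mem_erase, Formula.freeVars] at this ⊢; tauto
  | or φ ψ ihφ ihψ =>
      intro j hj
      simp only [Formula.subst, Formula.freeVars, Finset.mem_union] at hj
      rcases hj with hj | hj
      · have := ihφ hj
        simp only [Finset.mem_union, Finset.mem_erase, Formula.freeVars] at this ⊢; tauto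
      · have := ihψ hj
        simp only [Finset.mem_union, Finset.mem_erase, Formula.freeVars] at this ⊢; tauto
  | imp φ ψ ihφ ihψ =>
      intro j hj
      simp only [Formula.subst, Formula.freeVars, Finset.mem_union] at hj
      rcases hj with hj | hj
      · have := ihφ hj
        simp only [Finset.mem_union, Finset.mem_erase, Formula.freeVars] at this ⊢; tauto
      · have := ihψ hj
        simp only [Finset.mem_union, Finset.mem_erase, Formula.freeVars] at this ⊢; tauto
  | all i φ ih =>
      by_cases hix : i = x
      · subst hix
        simp only [Formula.subst, if_pos rfl, ↓reduceIte]
        intro j hj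
        simp only [Formula.freeVars, Finset.mem_erase, Finset.mem_union] at hj ⊢
        tauto
      · simp only [Formula.subst, if_neg hix]
        intro j hj
        simp only [Formula.freeVars, Finset.mem_erase] at hj
        obtain ⟨hji, hj⟩ := hj
        have := ih hj
        simp only [Finset.mem_union, Finset.mem_erase, Formula.freeVars] at this ⊢
        tauto
  | ex i φ ih =>
      by_cases hix : i = x
      · subst hix
        simp only [Formula.subst, if_pos rfl, ↓reduceIte]
        intro j hj
        simp only [Formula.freeVars, Finset.mem_erase, Finset.mem_union] at hj ⊢
        tauto
      · simp only [Formula.subst, if_neg hix]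
        intro j hj
        simp only [Formula.freeVars, Finset.mem_erase] at hj
        obtain ⟨hji, hj⟩ := hj
        have := ih hj
        simp only [Finset.mem_union, Finset.mem_erase, Formula.freeVars] at this ⊢
        tauto

lemma numeral_closed (n : ℕ) : (numeral n).varsOf = ∅ := by
  induction n with
  | zero => rfl
  | succ n ih => simpa [numeral, Term.varsOf] using ih

/-- The interpretation of the numeral m in a structure. -/
def Struct.num (M : Struct) : ℕ → M.carrier
  | 0 => M.zero
  | n + 1 => M.succ (M.num n)

lemma val_numeral (M : Struct) (v : ℕ → M.carrier) (n : ℕ) :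
    (numeral n).val M v = M.num n := by
  induction n with
  | zero => rfl
  | succ n ih => simp [numeral, Term.val, Struct.num, ih]

lemma trichotomy (M : Struct) (v : ℕ → M.carrier)
    (hQ : ∀ ψ ∈ QAxioms, Formula.Realize M v ψ) :
    ∀ (n : ℕ) (a : M.carrier), M.lt a (M.num n) ∨ a = M.num n ∨ M.lt (M.num n) a := by
  have hA3 : ∀ a : M.carrier, a ≠ M.zero → ∃ b, a = M.succ b := by
    have h := hQ (.all 0 (.imp (.not (.eq v0 .zero)) (.ex 1 (.eq v0 (.succ v1)))))
      (by simp [QAxioms])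
    intro a ha
    have := h a
    simp only [Formula.Realize, Term.val, v0, v1, Function.update_self,
      Function.update_of_ne (by norm_num : (0:ℕ) ≠ 1)] at this
    exact this ha
  have hA4 : ∀ a : M.carrier, M.add a M.zero = a := by
    have h := hQ (.all 0 (.eq (.add v0 .zero) v0)) (by simp [QAxioms])
    intro a
    have := h a
    simpa only [Formula.Realize, Term.val, v0, Function.update_self] using this
  have hA5 : ∀ a b : M.carrier, M.add a (M.succ b) = M.succ (M.add a b) := by
    have h := hQ (.all 0 (.all 1 (.eq (.add v0 (.succ v1)) (.succ (.add v0 v1)))))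
      (by simp [QAxioms])
    intro a b
    have := h a b
    simpa only [Formula.Realize, Term.val, v0, v1, Function.update_self,
      Function.update_of_ne (by norm_num : (0:ℕ) ≠ 1)] using this
  have hA8 : ∀ a b : M.carrier, M.lt a b ↔ ∃ c, M.add c (M.succ a) = b := by
    have h := hQ (.all 0 (.all 1 (Formula.iffF (.lt v0 v1)
        (.ex 2 (.eq (.add v2 (.succ v0)) v1))))) (by simp [QAxioms])
    intro a b
    have := h a b
    simp only [Formula.iffF, Formula.Realize, Term.val, v0, v1, v2,
      Function.update_self,
      Function.update_of_ne (by norm_num : (0:ℕ) ≠ 1),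
      Function.update_of_ne (by norm_num : (0:ℕ) ≠ 2),
      Function.update_of_ne (by norm_num : (1:ℕ) ≠ 2)] at this
    exact ⟨this.1, this.2⟩
  have haddnum : ∀ (j : ℕ) (a : M.carrier), M.add a (M.num j) = (M.succ)^[j] a := by
    intro j
    induction j with
    | zero => intro a; exact hA4 a
    | succ j ih =>
        intro a
        show M.add a (M.succ (M.num j)) = _
        rw [hA5, ih, Function.iterate_succ_apply']
  have hnumeq : ∀ n : ℕ, M.num n = (M.succ)^[n] M.zero := by
    intro n
    induction n with
    | zero => rfl
    | succ n ih => show M.succ (M.num n) = _; rw [ih, Function.iterate_succ_apply']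
  have hltnum : ∀ m n : ℕ, m < n → M.lt (M.num m) (M.num n) := by
    intro m n hmn
    rw [hA8]
    refine ⟨M.num (n - m - 1), ?_⟩
    rw [show M.succ (M.num m) = M.num (m + 1) from rfl, haddnum,
        hnumeq (n - m - 1), ← Function.iterate_add_apply, hnumeq n]
    congr 1
    omega
  have hA : ∀ (n : ℕ) (a : M.carrier), (∃ m ≤ n, a = M.num m) ∨ M.lt (M.num n) a := by
    intro n
    induction n with
    | zero =>
        intro a
        by_cases h : a = M.zero
        · exact Or.inl ⟨0, le_refl 0, h⟩
        · obtain ⟨b, rfl⟩ := hA3 a h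
          right
          rw [hA8]
          exact ⟨b, by rw [show M.num 0 = M.zero from rfl, hA5, hA4]⟩
    | succ n ih =>
        intro a
        rcases ih a with ⟨m, hm, rfl⟩ | hlt
        · exact Or.inl ⟨m, Nat.le_succ_of_le hm, rfl⟩
        · rw [hA8] at hlt
          obtain ⟨c, hc⟩ := hlt
          rw [show M.succ (M.num n) = M.num (n + 1) from rfl, haddnum] at hc
          by_cases h : c = M.zero
          · left
            exact ⟨n + 1, le_refl _, by rw [← hc, h, ← hnumeq]⟩
          · obtain ⟨d, rfl⟩ := hA3 c h
            right
            rw [hA8]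
            refine ⟨d, ?_⟩
            rw [show M.succ (M.num (n + 1)) = M.num (n + 2) from rfl, haddnum, ← hc]
            exact (Function.iterate_succ_apply M.succ (n + 1) d).symm
  intro n a
  rcases hA n a with ⟨m, hm, rfl⟩ | h
  · rcases lt_or_eq_of_le hm with h | rfl
    · exact Or.inl (hltnum m n h)
    · exact Or.inr (Or.inl rfl)
  · exact Or.inr (Or.inr h)

/-- If T extends Q, Pr_T is definable, and T ⊢ ψ(n,t), then the formula ψ(v₀,t)
names the number n, i.e. T ⊢ (∀v₀)(ψ(v₀,t) ↔ v₀ = n). -/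
theorem psi_names_n
    (T : Set Formula) (hTsent : ∀ σ ∈ T, σ.IsSentence)
    (hQT : QAxioms ⊆ T) (hdef : Definable (PrSet T))
    (g : ℕ → ℕ) (hg : GoodBound g)
    (φ : Formula) (hφ : DefinesRel φ (BRel T g)) (hφ2 : 2 ∉ φ.allVars)
    (k₂ : ℕ) (hk₂ : (psiOf φ).countFreeOcc 1 < k₂)
    (k : ℕ) (hk : k = (psiOf φ).length * k₂)
    (n : ℕ) (hn : ¬ Nameable T (10 * (k * k)) n)
    (hleast : ∀ m < n, Nameable T (10 * (k * k)) m)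
    (hprov : Proves T (((psiOf φ).subst 0 (numeral n)).subst 1 (tTerm k))) :
    Names T ((psiOf φ).subst 1 (tTerm k)) n := by
  classical
  obtain ⟨hφfv, -⟩ := hφ
  have h2b : (2 : ℕ) ∉ φ.bounds := fun h => hφ2 (Formula.bounds_subset_allVars φ h)
  have htc : (tTerm k).varsOf = ∅ := by
    simp [tTerm, Term.varsOf, numeral_closed]
  have hψfv : (psiOf φ).freeVars ⊆ {0, 1} := by
    have hsub2 : (φ.subst 0 v2).freeVars ⊆ φ.freeVars.erase 0 ∪ {2} := by
      have := Formula.freeVars_subst φ 0 v2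
      simpa [v2, Term.varsOf] using this
    intro j hj
    simp only [psiOf, Formula.freeVars, v0, v2, Term.varsOf, Finset.mem_union,
      Finset.mem_erase, Finset.mem_singleton] at hj
    rcases hj with hj | ⟨hj2, (hj | hj) | hj⟩
    · exact hφfv hj
    · exact absurd hj hj2
    · simp [hj]
    · have := hsub2 hj
      simp only [Finset.mem_union, Finset.mem_erase, Finset.mem_singleton] at this
      rcases this with ⟨-, hmem⟩ | h2
      · exact hφfv hmem
      · exact absurd h2 hj2
  constructor
  · -- free variables of ψ(v₀, t) are among {0}
    intro j hj
    have := Formula.freeVars_subst (psiOf φ) 1 (tTerm k) hj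
    rw [htc] at this
    simp only [Finset.union_empty, Finset.mem_erase] at this
    obtain ⟨hj1, hjmem⟩ := this
    have := hψfv hjmem
    simp only [Finset.mem_insert, Finset.mem_singleton] at this
    rcases this with rfl | rfl
    · simp
    · exact absurd rfl hj1
  · -- T ⊢ ∀v₀ (ψ(v₀,t) ↔ v₀ = n)
    intro M w hT
    have hQ : ∀ ψ' ∈ QAxioms, Formula.Realize M w ψ' := fun ψ' h => hT ψ' (hQT h)
    have htri := trichotomy M w hQ
    set tval := (tTerm k).val M w with htvaldef
    have htval_any : ∀ u : ℕ → M.carrier, (tTerm k).val M u = tval :=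
      fun u => Term.val_agree M (tTerm k) u w (by simp [htc])
    have hQdep : ∀ u : ℕ → M.carrier, u 1 = tval →
        (Formula.Realize M u φ ↔
          Formula.Realize M (Function.update (Function.update w 1 tval) 0 (u 0)) φ) := by
      intro u h1
      apply Formula.realize_agree
      intro j hj
      have hj' := hφfv hj
      simp only [Finset.mem_insert, Finset.mem_singleton] at hj'
      rcases hj' with rfl | rfl
      · simp
      · rw [Function.update_of_ne (by norm_num : (1:ℕ) ≠ 0), Function.update_self, h1]
    have hP : ∀ a : M.carrier,
        Formula.Realize M (Function.update (Function.update w 1 tval) 0 a) (psiOf φ) ↔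
          ((¬ Formula.Realize M (Function.update (Function.update w 1 tval) 0 a) φ) ∧
            ∀ b, M.lt b a →
              Formula.Realize M (Function.update (Function.update w 1 tval) 0 b) φ) := by
      intro a
      set u := Function.update (Function.update w 1 tval) 0 a with hu
      have hu1 : u 1 = tval := by
        rw [hu, Function.update_of_ne (by norm_num : (1:ℕ) ≠ 0), Function.update_self]
      have hu0 : u 0 = a := by rw [hu, Function.update_self]
      simp only [psiOf, Formula.Realize]
      apply and_congr Iff.rfl
      apply forall_congr'
      intro b
      have hlt : Formula.Realize M (Function.update u 2 b) (Formula.lt v2 v0) ↔ M.lt b a := by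
        simp only [Formula.Realize, Term.val, v2, v0, Function.update_self,
          Function.update_of_ne (by norm_num : (0:ℕ) ≠ 2), hu0]
      apply imp_congr hlt
      rw [Formula.realize_subst M v2 0 φ (Function.update u 2 b)
        (by intro i hi; simp only [v2, Term.varsOf, Finset.mem_singleton] at hi
            subst hi; exact h2b)]
      have hval2 : Term.val M (Function.update u 2 b) v2 = b := by
        simp [v2, Term.val]
      rw [hval2]
      have h1' : (Function.update (Function.update u 2 b) 0 b) 1 = tval := by
        rw [Function.update_of_ne (by norm_num : (1:ℕ) ≠ 0),
            Function.update_of_ne (by norm_num : (1:ℕ) ≠ 2), hu1]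
      have := hQdep (Function.update (Function.update u 2 b) 0 b) h1'
      rw [Function.update_self] at this
      exact this
    have h0 := hprov M w hT
    rw [Formula.realize_subst M (tTerm k) 1 ((psiOf φ).subst 0 (numeral n)) w
      (by simp [htc])] at h0
    rw [Formula.realize_subst M (numeral n) 0 (psiOf φ) _
      (by simp [numeral_closed])] at h0
    rw [← htvaldef, val_numeral] at h0
    have hPn := (hP (M.num n)).mp h0
    simp only [Formula.Realize]
    intro a
    have key : Formula.Realize M (Function.update w 0 a) ((psiOf φ).subst 1 (tTerm k)) ↔
        ((¬ Formula.Realize M (Function.update (Function.update w 1 tval) 0 a) φ) ∧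
          ∀ b, M.lt b a →
            Formula.Realize M (Function.update (Function.update w 1 tval) 0 b) φ) := by
      rw [Formula.realize_subst M (tTerm k) 1 (psiOf φ) _ (by simp [htc])]
      rw [htval_any, Function.update_comm (by norm_num : (0:ℕ) ≠ 1)]
      exact hP a
    have hupd : Function.update w 0 a 0 = a := Function.update_self 0 a w
    simp only [Formula.iffF, Formula.Realize, Term.val, v0, val_numeral, hupd]
    constructor
    · intro h
      obtain ⟨h1, h2⟩ := key.mp h
      rcases htri n a with hlt | heq | hgt
      · exact absurd (hPn.2 a hlt) h1
      · exact heq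
      · exact absurd (h2 _ hgt) hPn.1
    · intro h
      subst h
      exact key.mpr hPn


end Boolos
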